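/- arXiv:2110.15233 — 2 statements merged into one kernel-verified Lean document; each statement's English description precedes it below -/
import Mathlib

section
/- Let β > 0 and let φ : ℝ → ℝ be continuous with supp(φ) ⊆ [0, β], such that the Fourier transform φ̂ is continuous at 0 with φ̂(0) = 1. Let l > 0 and let γ : ℝ → ℝ be an l-periodic, twice continuously differentiable function, and set γ̃ := γ·1_{[−l,l]}. Fix j₀ ∈ ℤ and k₀ ∈ ℤ such that the dyadic point t := k₀·2^{−j₀} lies in the open interval (−l, l). Then lim_{j→∞} 2^{j/2} ⟨γ̃, φ_{j, k₀·2^{j−j₀}}⟩ = γ(t), where the limit is over integers j ≥ j₀; that is, for large resolution levels the rescaled approximation coefficients converge to the sample values of γ. -/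
open MeasureTheory Filter Topology

/-- `φ_{jk}(x) = 2^{j/2} φ(2^j x − k)`. -/
noncomputable def phiJK (φ : ℝ → ℝ) (j k : ℤ) (x : ℝ) : ℝ :=
  (2:ℝ) ^ ((j:ℝ) / 2) * φ ((2:ℝ) ^ j * x - (k:ℝ))

/-- The Fourier transform `φ̂(ξ) = ∫ φ(t) e^{−2πiξt} dt`. -/
noncomputable def fourierT (φ : ℝ → ℝ) (ξ : ℝ) : ℂ :=
  ∫ t : ℝ, (φ t : ℂ) * Complex.exp (-(2 * (Real.pi : ℂ) * Complex.I * (ξ : ℂ) * (t : ℂ)))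

/-- `2^{-j} → 0` as `j → ∞` over the integers. -/
lemma tendsto_two_zpow_neg_atTop : Tendsto (fun j : ℤ => (2:ℝ) ^ (-j)) atTop (𝓝 0) := by
  have hn : Tendsto (fun n : ℕ => ((2:ℝ)⁻¹) ^ n) atTop (𝓝 0) :=
    tendsto_pow_atTop_nhds_zero_of_lt_one (by norm_num) (by norm_num)
  have htn : Tendsto (fun j : ℤ => j.toNat) atTop atTop :=
    tendsto_atTop_atTop.2 fun b => ⟨(b : ℤ), fun a ha => by omega⟩
  refine (hn.comp htn).congr' ?_
  filter_upwards [eventually_ge_atTop (0 : ℤ)] with j hj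
  have : ((j.toNat : ℤ)) = j := Int.toNat_of_nonneg hj
  simp only [Function.comp]
  rw [zpow_neg, inv_pow, ← zpow_natCast (2:ℝ), this]

/-- for continuous `φ` supported on `[0, β]` with `φ̂` continuous at `0` and
`φ̂(0) = 1`, an `l`-periodic `C²` map `γ`, `γ̃ = γ·1_{[−l,l]}`, and a dyadic point
`t = k₀ 2^{−j₀} ∈ (−l, l)`, the rescaled approximation coefficients
`2^{j/2} ⟨γ̃, φ_{j, k₀ 2^{j−j₀}}⟩` converge to the sample value `γ(t)` as `j → ∞`. -/
theorem stmt4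
    (β : ℝ) (hβ : 0 < β)
    (φ : ℝ → ℝ) (hφc : Continuous φ)
    (hsupp : Function.support φ ⊆ Set.Icc 0 β)
    (hcont : ContinuousAt (fourierT φ) 0) (hone : fourierT φ 0 = 1)
    (l : ℝ) (hl : 0 < l)
    (γ : ℝ → ℝ) (hper : Function.Periodic γ l) (hsm : ContDiff ℝ 2 γ)
    (j₀ k₀ : ℤ) (ht : (k₀ : ℝ) * (2:ℝ) ^ (-j₀) ∈ Set.Ioo (-l) l) :
    Tendsto (fun j : ℤ => (((2:ℝ) ^ ((j:ℝ) / 2) : ℝ) : ℂ) *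
        ∫ t : ℝ, ((Set.indicator (Set.Icc (-l) l) γ t : ℝ) : ℂ) *
          (starRingEnd ℂ) ((phiJK φ j (k₀ * 2 ^ (j - j₀).toNat) t : ℝ) : ℂ))
      atTop (𝓝 ((γ ((k₀ : ℝ) * (2:ℝ) ^ (-j₀)) : ℝ) : ℂ)) := by
  set t₀ : ℝ := (k₀ : ℝ) * (2:ℝ) ^ (-j₀) with ht₀def
  set γt : ℝ → ℝ := Set.indicator (Set.Icc (-l) l) γ with hγtdef
  have hγc : Continuous γ := hsm.continuous
  -- φ is integrable
  have hKsupp : HasCompactSupport φ := by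
    refine IsCompact.of_isClosed_subset isCompact_Icc isClosed_closure
      (closure_minimal hsupp isClosed_Icc)
  have hφint : Integrable φ := hφc.integrable_of_hasCompactSupport hKsupp
  -- the integral of φ is 1
  have hφ0 : ∫ u : ℝ, φ u = 1 := by
    have h1 : fourierT φ 0 = ((∫ u : ℝ, φ u : ℝ) : ℂ) := by
      unfold fourierT
      simp only [Complex.ofReal_zero, mul_zero, zero_mul, neg_zero, Complex.exp_zero, mul_one]
      exact integral_ofReal
    rw [hone] at h1
    exact_mod_cast h1.symm
  -- bound for γt
  obtain ⟨C₀, hC₀⟩ : ∃ C, ∀ x ∈ Set.Icc (-l) l, ‖γ x‖ ≤ C :=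
    isCompact_Icc.exists_bound_of_continuousOn hγc.continuousOn
  set C : ℝ := max C₀ 0 with hCdef
  have hγtb : ∀ x, |γt x| ≤ C := by
    intro x
    by_cases hx : x ∈ Set.Icc (-l) l
    · rw [hγtdef, Set.indicator_of_mem hx]
      exact le_trans (hC₀ x hx) (le_max_left _ _)
    · rw [hγtdef, Set.indicator_of_notMem hx]
      rw [abs_zero]
      exact le_max_right _ _
  -- measurability of γt
  have hγtm : Measurable γt := hγc.measurable.indicator measurableSet_Icc
  -- the key real convergence, via dominated convergence
  have key : Tendsto (fun j : ℤ => ∫ u : ℝ, γt (t₀ + (2:ℝ) ^ (-j) * u) * φ u)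
      atTop (𝓝 (γ t₀)) := by
    have hDCT : Tendsto (fun j : ℤ => ∫ u : ℝ, γt (t₀ + (2:ℝ) ^ (-j) * u) * φ u)
        atTop (𝓝 (∫ u : ℝ, γ t₀ * φ u)) := by
      refine tendsto_integral_filter_of_dominated_convergence
        (fun u => C * |φ u|) ?_ ?_ ?_ ?_
      · filter_upwards with j
        exact ((hγtm.comp (measurable_const.add
          (measurable_const.mul measurable_id))).mul hφc.measurable).aestronglyMeasurable
      · filter_upwards with j
        filter_upwards with u
        rw [Real.norm_eq_abs, abs_mul]
        exact mul_le_mul_of_nonneg_right (hγtb _) (abs_nonneg _)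
      · exact (hφint.norm.const_mul C).congr (by simp [Real.norm_eq_abs])
      · filter_upwards with u
        have harg : Tendsto (fun j : ℤ => t₀ + (2:ℝ) ^ (-j) * u) atTop (𝓝 t₀) := by
          have := (tendsto_two_zpow_neg_atTop.mul_const u).const_add t₀
          simpa using this
        have hmem : ∀ᶠ j : ℤ in atTop, t₀ + (2:ℝ) ^ (-j) * u ∈ Set.Ioo (-l) l :=
          harg (Ioo_mem_nhds ht.1 ht.2)
        have hγtend : Tendsto (fun j : ℤ => γ (t₀ + (2:ℝ) ^ (-j) * u)) atTop (𝓝 (γ t₀)) :=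
          (hγc.tendsto t₀).comp harg
        have heq : (fun j : ℤ => γ (t₀ + (2:ℝ) ^ (-j) * u)) =ᶠ[atTop]
            fun j : ℤ => γt (t₀ + (2:ℝ) ^ (-j) * u) := by
          filter_upwards [hmem] with j hj
          rw [hγtdef, Set.indicator_of_mem (Set.Ioo_subset_Icc_self hj)]
        exact ((hγtend.congr' heq).mul_const (φ u))
    have : ∫ u : ℝ, γ t₀ * φ u = γ t₀ := by
      rw [integral_const_mul, hφ0, mul_one]
    rwa [this] at hDCT
  -- pass to ℂ
  have keyC : Tendsto (fun j : ℤ => ((∫ u : ℝ, γt (t₀ + (2:ℝ) ^ (-j) * u) * φ u : ℝ) : ℂ))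
      atTop (𝓝 ((γ t₀ : ℝ) : ℂ)) :=
    (Complex.continuous_ofReal.tendsto _).comp key
  refine keyC.congr' ?_
  filter_upwards [eventually_ge_atTop j₀] with j hj
  -- the eventual equality
  have h2j : (0:ℝ) < (2:ℝ) ^ j := zpow_pos (by norm_num) j
  have hkcast : ((k₀ * 2 ^ (j - j₀).toNat : ℤ) : ℝ) = (k₀ : ℝ) * (2:ℝ) ^ (j - j₀) := by
    push_cast
    rw [← zpow_natCast (2:ℝ) (j - j₀).toNat, Int.toNat_of_nonneg (by omega)]
  have harg : ∀ t : ℝ, (2:ℝ) ^ j * t - ((k₀ * 2 ^ (j - j₀).toNat : ℤ) : ℝ)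
      = (2:ℝ) ^ j * (t - t₀) := by
    intro t
    rw [hkcast, ht₀def]
    rw [zpow_sub₀ (by norm_num : (2:ℝ) ≠ 0)]
    field_simp
    have h2 : (2:ℝ) ^ j₀ * (2:ℝ) ^ (-j₀) = 1 := by
      rw [← zpow_add₀ (by norm_num : (2:ℝ) ≠ 0), add_neg_cancel, zpow_zero]
    linear_combination (k₀:ℝ) * h2
  -- collapse the complex integral to a real one
  have hcollapse : (((2:ℝ) ^ ((j:ℝ) / 2) : ℝ) : ℂ) *
      ∫ t : ℝ, ((γt t : ℝ) : ℂ) *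
        (starRingEnd ℂ) ((phiJK φ j (k₀ * 2 ^ (j - j₀).toNat) t : ℝ) : ℂ)
      = (((2:ℝ) ^ ((j:ℝ) / 2) *
          ∫ t : ℝ, γt t * phiJK φ j (k₀ * 2 ^ (j - j₀).toNat) t : ℝ) : ℂ) := by
    rw [Complex.ofReal_mul]
    congr 1
    have heq : ∀ t : ℝ, ((γt t : ℝ) : ℂ) *
        (starRingEnd ℂ) ((phiJK φ j (k₀ * 2 ^ (j - j₀).toNat) t : ℝ) : ℂ)
        = (((γt t * phiJK φ j (k₀ * 2 ^ (j - j₀).toNat) t : ℝ)) : ℂ) := fun t => by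
      rw [Complex.conj_ofReal, Complex.ofReal_mul]
    rw [integral_congr_ae (Filter.Eventually.of_forall heq)]
    exact integral_ofReal
  rw [hcollapse]
  congr 1
  -- the real change of variables
  have hpull : ∫ t : ℝ, γt t * phiJK φ j (k₀ * 2 ^ (j - j₀).toNat) t
      = (2:ℝ) ^ ((j:ℝ) / 2) * ∫ t : ℝ, γt t * φ ((2:ℝ) ^ j * (t - t₀)) := by
    rw [← integral_const_mul]
    congr 1
    ext t
    rw [phiJK, harg t]
    ring
  have hcomp : ∀ u : ℝ, γt (t₀ + (2:ℝ) ^ (-j) * u) * φ u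
      = (fun v : ℝ => γt (t₀ + v) * φ ((2:ℝ) ^ j * v)) ((2:ℝ) ^ (-j) * u) := by
    intro u
    simp only []
    congr 2
    rw [zpow_neg, ← mul_assoc, mul_inv_cancel₀ (ne_of_gt h2j), one_mul]
  have hcv1 : ∫ u : ℝ, γt (t₀ + (2:ℝ) ^ (-j) * u) * φ u
      = |((2:ℝ) ^ (-j))⁻¹| • ∫ v : ℝ, γt (t₀ + v) * φ ((2:ℝ) ^ j * v) := by
    rw [← MeasureTheory.Measure.integral_comp_mul_left
      (fun v : ℝ => γt (t₀ + v) * φ ((2:ℝ) ^ j * v)) ((2:ℝ) ^ (-j))]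
    exact integral_congr_ae (Filter.Eventually.of_forall fun u => hcomp u)
  have habs : |((2:ℝ) ^ (-j))⁻¹| = (2:ℝ) ^ j := by
    rw [zpow_neg, inv_inv, abs_of_pos h2j]
  have hcv2 : ∫ v : ℝ, γt (t₀ + v) * φ ((2:ℝ) ^ j * v)
      = ∫ t : ℝ, γt t * φ ((2:ℝ) ^ j * (t - t₀)) := by
    rw [← integral_add_left_eq_self (fun t : ℝ => γt t * φ ((2:ℝ) ^ j * (t - t₀))) t₀]
    congr 1
    ext v
    simp [add_sub_cancel_left]
  have hpow : (2:ℝ) ^ ((j:ℝ) / 2) * (2:ℝ) ^ ((j:ℝ) / 2) = (2:ℝ) ^ j := by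
    rw [← Real.rpow_add (by norm_num : (0:ℝ) < 2)]
    rw [show (j:ℝ) / 2 + (j:ℝ) / 2 = (j:ℝ) by ring]
    rw [← Real.rpow_intCast]
  rw [hpull, ← mul_assoc, hpow, hcv1, habs, hcv2, smul_eq_mul]
end

section
/- Let V be a closed subspace of L²(ℝ) (a Hilbert space), let (e_l)_{l∈ℤ} be an orthonormal family spanning a dense subspace of V, and let h, g : ℤ → ℂ be finitely supported. For m ∈ ℤ define u_m := Σ_{l∈ℤ} h_{l−2m} e_l and v_m := Σ_{l∈ℤ} g_{l−2m} e_l, and assume that the combined family (u_m)_{m∈ℤ} ∪ (v_m)_{m∈ℤ} is an orthonormal family spanning a dense subspace of V. Then for every γ ∈ V and every k ∈ ℤ, ⟨γ, e_k⟩ = Σ_{m∈ℤ} h_{k−2m} ⟨γ, u_m⟩ + Σ_{m∈ℤ} g_{k−2m} ⟨γ, v_m⟩. (In the wavelet setting, with e_l = φ_{j+1,l}, u_m = φ_{jm}, v_m = ψ_{jm}, this is the reconstruction step of the Pyramid Algorithm: a_{j+1} = C_h M⁺ a_j + C_g M⁺ d_j.) -/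
open MeasureTheory Function

lemma aux_inner_finsum {H : Type*} [NormedAddCommGroup H] [InnerProductSpace ℂ H]
    (e : ℤ → H) (hON : Orthonormal ℂ e) (c : ℤ → ℂ) (hc : (Function.support c).Finite)
    (k : ℤ) : (inner ℂ (e k) (∑ᶠ l : ℤ, c l • e l) : ℂ) = c k := by
  have hsub : Function.support (fun l => c l • e l) ⊆ hc.toFinset := by
    intro l hl
    simp only [Set.Finite.coe_toFinset]
    intro h0
    exact hl (by simp [h0])
  rw [finsum_eq_finset_sum_of_support_subset _ hsub, inner_sum]
  simp only [inner_smul_right, orthonormal_iff_ite.mp hON]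
  simp only [mul_ite, mul_one, mul_zero]
  rw [Finset.sum_ite_eq hc.toFinset k c]
  by_cases hk : c k = 0
  · simp [hk]
  · simp [hc.mem_toFinset.mpr hk]

/-- reconstruction step of the Pyramid Algorithm: in the Hilbert space
`L²(ℝ)`, let `V` be the closed subspace spanned by an orthonormal family `(e_l)`, let
`h, g : ℤ → ℂ` be finitely supported, and set `u_m := Σ_l h_{l−2m} e_l`,
`v_m := Σ_l g_{l−2m} e_l`.  If the combined family `(u_m) ∪ (v_m)` is orthonormal and
spans a dense subspace of `V`, then for every `γ ∈ V` and every `k`,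
`⟨γ, e_k⟩ = Σ_m h_{k−2m} ⟨γ, u_m⟩ + Σ_m g_{k−2m} ⟨γ, v_m⟩`.
(The paper's inner product `⟨x, y⟩` is conjugate-linear in the second argument, i.e. it
is Mathlib's `⟪y, x⟫`.) -/
theorem stmt8
    (V : Submodule ℂ (Lp ℂ 2 (volume : Measure ℝ)))
    (e : ℤ → Lp ℂ 2 (volume : Measure ℝ)) (hON : Orthonormal ℂ e)
    (hspan : (Submodule.span ℂ (Set.range e)).topologicalClosure = V)
    (h g : ℤ → ℂ) (hh : (Function.support h).Finite) (hg : (Function.support g).Finite)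
    (u v : ℤ → Lp ℂ 2 (volume : Measure ℝ))
    (hu : ∀ m : ℤ, u m = ∑ᶠ l : ℤ, h (l - 2 * m) • e l)
    (hv : ∀ m : ℤ, v m = ∑ᶠ l : ℤ, g (l - 2 * m) • e l)
    (hON2 : Orthonormal ℂ (Sum.elim u v))
    (hspan2 : (Submodule.span ℂ (Set.range (Sum.elim u v))).topologicalClosure = V)
    (γ : Lp ℂ 2 (volume : Measure ℝ)) (hγ : γ ∈ V) (k : ℤ) :
    (inner ℂ (e k) γ : ℂ)
      = (∑ᶠ m : ℤ, h (k - 2 * m) * (inner ℂ (u m) γ : ℂ))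
        + ∑ᶠ m : ℤ, g (k - 2 * m) * (inner ℂ (v m) γ : ℂ) := by
  -- finite supports of m ↦ h (k - 2m) etc.
  have hfh : (Function.support fun m : ℤ => h (k - 2 * m)).Finite := by
    have : (Function.support fun m : ℤ => h (k - 2 * m))
        = (fun m : ℤ => k - 2 * m) ⁻¹' Function.support h := rfl
    rw [this]
    exact Set.Finite.preimage (fun a _ b _ hab => by omega) hh
  have hfg : (Function.support fun m : ℤ => g (k - 2 * m)).Finite := by
    have : (Function.support fun m : ℤ => g (k - 2 * m))
        = (fun m : ℤ => k - 2 * m) ⁻¹' Function.support g := rfl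
    rw [this]
    exact Set.Finite.preimage (fun a _ b _ hab => by omega) hg
  set s : Finset ℤ := hfh.toFinset ∪ hfg.toFinset with hs
  -- convert finsums to finset sums over s
  have e1 : (∑ᶠ m : ℤ, h (k - 2 * m) * (inner ℂ (u m) γ : ℂ))
      = ∑ m ∈ s, h (k - 2 * m) * (inner ℂ (u m) γ : ℂ) := by
    apply finsum_eq_finset_sum_of_support_subset
    intro m hm
    have : h (k - 2 * m) ≠ 0 := fun h0 => hm (by simp [h0])
    simp only [hs, Finset.coe_union, Set.mem_union, Set.Finite.coe_toFinset,
      Function.mem_support]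
    exact Or.inl this
  have e2 : (∑ᶠ m : ℤ, g (k - 2 * m) * (inner ℂ (v m) γ : ℂ))
      = ∑ m ∈ s, g (k - 2 * m) * (inner ℂ (v m) γ : ℂ) := by
    apply finsum_eq_finset_sum_of_support_subset
    intro m hm
    have : g (k - 2 * m) ≠ 0 := fun h0 => hm (by simp [h0])
    simp only [hs, Finset.coe_union, Set.mem_union, Set.Finite.coe_toFinset,
      Function.mem_support]
    exact Or.inr this
  rw [e1, e2]
  -- the continuous linear functional
  set φ : Lp ℂ 2 (volume : Measure ℝ) →L[ℂ] ℂ :=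
    innerSL ℂ (e k) - (∑ m ∈ s, h (k - 2 * m) • innerSL ℂ (u m)
      + ∑ m ∈ s, g (k - 2 * m) • innerSL ℂ (v m)) with hφ
  have key : ∀ x ∈ V, φ x = 0 := by
    intro x hx
    have hVle : V ≤ LinearMap.ker (φ : Lp ℂ 2 (volume : Measure ℝ) →ₗ[ℂ] ℂ) := by
      rw [← hspan2]
      apply Submodule.topologicalClosure_minimal
      · rw [Submodule.span_le]
        rintro _ ⟨i, rfl⟩
        have ite2 := orthonormal_iff_ite.mp hON2
        cases i with
        | inl n =>
          simp only [Sum.elim_inl, SetLike.mem_coe, LinearMap.mem_ker,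
            ContinuousLinearMap.coe_coe]
          have h1 : (inner ℂ (e k) (u n) : ℂ) = h (k - 2 * n) := by
            rw [hu n]
            exact aux_inner_finsum e hON _
              (Set.Finite.preimage (fun a _ b _ hab => by omega) hh) k
          have h2 : ∀ m, (inner ℂ (u m) (u n) : ℂ) = if m = n then 1 else 0 := by
            intro m
            simpa using ite2 (Sum.inl m) (Sum.inl n)
          have h3 : ∀ m, (inner ℂ (v m) (u n) : ℂ) = 0 := by
            intro m
            simpa using ite2 (Sum.inr m) (Sum.inl n)
          simp only [hφ, ContinuousLinearMap.sub_apply, ContinuousLinearMap.add_apply,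
            ContinuousLinearMap.coe_sum', Finset.sum_apply, ContinuousLinearMap.coe_smul',
            Pi.smul_apply, innerSL_apply_apply, smul_eq_mul, h1, h2, h3, mul_zero,
            Finset.sum_const_zero, add_zero, mul_ite, mul_one]
          rw [Finset.sum_ite_eq' s n fun m => h (k - 2 * m)]
          by_cases hn : n ∈ s
          · simp [hn]
          · have : h (k - 2 * n) = 0 := by
              by_contra h0
              exact hn (by simp [hs, hfh.mem_toFinset.mpr h0])
            simp [hn, this]
        | inr n =>
          simp only [Sum.elim_inr, SetLike.mem_coe, LinearMap.mem_ker,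
            ContinuousLinearMap.coe_coe]
          have h1 : (inner ℂ (e k) (v n) : ℂ) = g (k - 2 * n) := by
            rw [hv n]
            exact aux_inner_finsum e hON _
              (Set.Finite.preimage (fun a _ b _ hab => by omega) hg) k
          have h2 : ∀ m, (inner ℂ (v m) (v n) : ℂ) = if m = n then 1 else 0 := by
            intro m
            simpa using ite2 (Sum.inr m) (Sum.inr n)
          have h3 : ∀ m, (inner ℂ (u m) (v n) : ℂ) = 0 := by
            intro m
            simpa using ite2 (Sum.inl m) (Sum.inr n)
          simp only [hφ, ContinuousLinearMap.sub_apply, ContinuousLinearMap.add_apply,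
            ContinuousLinearMap.coe_sum', Finset.sum_apply, ContinuousLinearMap.coe_smul',
            Pi.smul_apply, innerSL_apply_apply, smul_eq_mul, h1, h2, h3, mul_zero,
            Finset.sum_const_zero, zero_add, mul_ite, mul_one]
          rw [Finset.sum_ite_eq' s n fun m => g (k - 2 * m)]
          by_cases hn : n ∈ s
          · simp [hn]
          · have : g (k - 2 * n) = 0 := by
              by_contra h0
              exact hn (by simp [hs, hfg.mem_toFinset.mpr h0])
            simp [hn, this]
      · exact ContinuousLinearMap.isClosed_ker φ
    exact hVle hx
  have := key γ hγ
  simp only [hφ, ContinuousLinearMap.sub_apply, ContinuousLinearMap.add_apply,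
    ContinuousLinearMap.coe_sum', Finset.sum_apply, ContinuousLinearMap.coe_smul',
    Pi.smul_apply, innerSL_apply_apply, smul_eq_mul] at this
  rwa [sub_eq_zero] at this
end
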